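/- Let (X, ≤) be a chain-complete partially ordered set. Then X is directed-complete: every subset D ⊆ X that is directed with respect to ≤ (any two elements of D have a common upper bound in D) has a least upper bound in X. -/

import Mathlib

open Set Cardinal Ordinal

section Aux

universe u
variable {X : Type u} [PartialOrder X]

/-- Iterated closure of a set under a binary "upper bound" operation. -/
private def dclIter (u : X → X → X) (S : Set X) : ℕ → Set X
  | 0 => S
  | n + 1 => dclIter u S n ∪ Set.image2 u (dclIter u S n) (dclIter u S n)

/-- Directed closure of `S` under `u`. -/
private def dcl (u : X → X → X) (S : Set X) : Set X := ⋃ n : ULift.{u} ℕ, dclIter u S n.down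

private lemma dclIter_mono_nat (u : X → X → X) (S : Set X) {m n : ℕ} (h : m ≤ n) :
    dclIter u S m ⊆ dclIter u S n := by
  induction n with
  | zero => simpa [Nat.le_zero.1 h]
  | succ n ih =>
    rcases Nat.lt_or_ge m (n + 1) with h' | h'
    · exact (ih (Nat.lt_succ_iff.1 h')).trans subset_union_left
    · have : m = n + 1 := le_antisymm h h'
      simp [this]

private lemma subset_dcl (u : X → X → X) (S : Set X) : S ⊆ dcl u S :=
  fun x hx => mem_iUnion.2 ⟨⟨0⟩, hx⟩

private lemma dclIter_subset {u : X → X → X} {D S : Set X}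
    (hu : ∀ a ∈ D, ∀ b ∈ D, u a b ∈ D ∧ a ≤ u a b ∧ b ≤ u a b) (hS : S ⊆ D) (n : ℕ) :
    dclIter u S n ⊆ D := by
  induction n with
  | zero => exact hS
  | succ n ih =>
    refine union_subset ih ?_
    rw [image2_subset_iff]
    exact fun a ha b hb => (hu a (ih ha) b (ih hb)).1

private lemma dcl_subset {u : X → X → X} {D S : Set X}
    (hu : ∀ a ∈ D, ∀ b ∈ D, u a b ∈ D ∧ a ≤ u a b ∧ b ≤ u a b) (hS : S ⊆ D) :
    dcl u S ⊆ D :=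
  iUnion_subset fun n => dclIter_subset hu hS n.down

private lemma directedOn_dcl {u : X → X → X} {D S : Set X}
    (hu : ∀ a ∈ D, ∀ b ∈ D, u a b ∈ D ∧ a ≤ u a b ∧ b ≤ u a b) (hS : S ⊆ D) :
    DirectedOn (· ≤ ·) (dcl u S) := by
  intro a ha b hb
  obtain ⟨m, ham⟩ := mem_iUnion.1 ha
  obtain ⟨n, hbn⟩ := mem_iUnion.1 hb
  have ha' : a ∈ dclIter u S (max m.down n.down) :=
    dclIter_mono_nat u S (le_max_left _ _) ham
  have hb' : b ∈ dclIter u S (max m.down n.down) :=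
    dclIter_mono_nat u S (le_max_right _ _) hbn
  have haD : a ∈ D := dclIter_subset hu hS _ ha'
  have hbD : b ∈ D := dclIter_subset hu hS _ hb'
  refine ⟨u a b, mem_iUnion.2 ⟨⟨max m.down n.down + 1⟩, ?_⟩, (hu a haD b hbD).2.1,
    (hu a haD b hbD).2.2⟩
  exact Or.inr (mem_image2_of_mem ha' hb')

private lemma dclIter_mono_set {u : X → X → X} {S T : Set X} (h : S ⊆ T) (n : ℕ) :
    dclIter u S n ⊆ dclIter u T n := by
  induction n with
  | zero => exact h
  | succ k ih =>
    refine union_subset (ih.trans subset_union_left) ?_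
    rw [image2_subset_iff]
    exact fun a ha b hb => Or.inr (mem_image2_of_mem (ih ha) (ih hb))

private lemma dcl_mono {u : X → X → X} {S T : Set X} (h : S ⊆ T) : dcl u S ⊆ dcl u T :=
  iUnion_mono fun n => dclIter_mono_set h n.down

private lemma mk_dclIter_le (u : X → X → X) (S : Set X) (n : ℕ) :
    #(dclIter u S n) ≤ max #S ℵ₀ := by
  induction n with
  | zero => exact le_max_left _ _
  | succ n ih =>
    have hμ : ℵ₀ ≤ max #S ℵ₀ := le_max_right _ _
    calc #(dclIter u S (n + 1))
        ≤ #(dclIter u S n) + #(Set.image2 u (dclIter u S n) (dclIter u S n)) := mk_union_le _ _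
      _ ≤ max #S ℵ₀ + max #S ℵ₀ * max #S ℵ₀ := by
          gcongr
          exact mk_image2_le.trans (by gcongr)
      _ = max #S ℵ₀ := by rw [mul_eq_self hμ, add_eq_self hμ]

private lemma mk_dcl_le (u : X → X → X) (S : Set X) : #(dcl u S) ≤ max #S ℵ₀ := by
  have h1 : #(dcl u S) ≤ #(ULift.{u} ℕ) * ⨆ n : ULift.{u} ℕ, #(dclIter u S n.down) :=
    mk_iUnion_le fun n : ULift.{u} ℕ => dclIter u S n.down
  have h2 : (⨆ n : ULift ℕ, #(dclIter u S n.down)) ≤ max #S ℵ₀ :=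
    ciSup_le' fun n => mk_dclIter_le u S n.down
  have h3 : #(ULift.{u} ℕ) = ℵ₀ := mk_eq_aleph0 _
  calc #(dcl u S) ≤ #(ULift.{u} ℕ) * max #S ℵ₀ := h1.trans (mul_le_mul_right h2 _)
    _ = ℵ₀ * max #S ℵ₀ := by rw [h3]
    _ ≤ max #S ℵ₀ * max #S ℵ₀ := by gcongr; exact le_max_right _ _
    _ = max #S ℵ₀ := mul_eq_self (le_max_right _ _)

/-- The countable case: a countable nonempty directed set has a cofinal ω-chain. -/
private lemma countable_case (hcc : ∀ C : Set X, IsChain (· ≤ ·) C → ∃ s, IsLUB C s)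
    {D : Set X} (hD : DirectedOn (· ≤ ·) D) (hc : D.Countable) (hne : D.Nonempty) :
    ∃ s, IsLUB D s := by
  obtain ⟨f, hf⟩ := hc.exists_eq_range hne
  have hfD : ∀ n, f n ∈ D := fun n => hf ▸ mem_range_self n
  have hch : ∀ a b : X, ∃ c : X, a ∈ D → b ∈ D → c ∈ D ∧ a ≤ c ∧ b ≤ c := by
    intro a b
    by_cases ha : a ∈ D
    · by_cases hb : b ∈ D
      · obtain ⟨c, hc1, hc2, hc3⟩ := hD a ha b hb
        exact ⟨c, fun _ _ => ⟨hc1, hc2, hc3⟩⟩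
      · exact ⟨a, fun _ h => absurd h hb⟩
    · exact ⟨a, fun h _ => absurd h ha⟩
  choose u hu using hch
  let e : ℕ → X := fun n => Nat.rec (f 0) (fun n en => u en (f (n + 1))) n
  have heD : ∀ n, e n ∈ D := by
    intro n
    induction n with
    | zero => exact hfD 0
    | succ n ih => exact (hu _ _ ih (hfD (n + 1))).1
  have hstep : ∀ n, e n ≤ e (n + 1) := fun n => (hu _ _ (heD n) (hfD (n + 1))).2.1
  have hmono : Monotone e := monotone_nat_of_le_succ hstep
  have hfe : ∀ n, f n ≤ e n := by
    intro n
    cases n with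
    | zero => exact le_rfl
    | succ n => exact (hu _ _ (heD n) (hfD (n + 1))).2.2
  have hchain : IsChain (· ≤ ·) (Set.range e) := by
    rintro _ ⟨m, rfl⟩ _ ⟨n, rfl⟩ _
    rcases le_total m n with h | h
    · exact Or.inl (hmono h)
    · exact Or.inr (hmono h)
  obtain ⟨s, hs⟩ := hcc _ hchain
  refine ⟨s, ⟨?_, ?_⟩⟩
  · intro d hd
    rw [hf] at hd
    obtain ⟨n, rfl⟩ := hd
    exact (hfe n).trans (hs.1 (mem_range_self n))
  · intro b hb
    exact hs.2 (by rintro _ ⟨n, rfl⟩; exact hb (heD n))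

end Aux

/-- A chain-complete poset is directed-complete: every directed subset has
a least upper bound. -/
theorem stmt_9 {X : Type*} [PartialOrder X]
    (hcc : ∀ C : Set X, IsChain (· ≤ ·) C → ∃ s, IsLUB C s) :
    ∀ D : Set X, DirectedOn (· ≤ ·) D → ∃ s, IsLUB D s := by
  suffices h : ∀ κ : Cardinal, ∀ D : Set X, DirectedOn (· ≤ ·) D → #D ≤ κ → ∃ s, IsLUB D s by
    intro D hD; exact h _ D hD le_rfl
  intro κ
  induction κ using WellFoundedLT.induction with
  | _ κ IH =>
  intro D hD hκ
  by_cases hcnt : D.Countable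
  · rcases D.eq_empty_or_nonempty with rfl | hne
    · obtain ⟨s, hs⟩ := hcc ∅ (by simp [IsChain])
      exact ⟨s, hs⟩
    · exact countable_case hcc hD hcnt hne
  · -- uncountable case: Iwamura's lemma
    have hℵ : ℵ₀ < #D := by
      rw [← not_le]
      intro h
      exact hcnt (Set.countable_coe_iff.1 (Cardinal.mk_le_aleph0_iff.1 h))
    obtain ⟨r, wo, hr⟩ := Cardinal.ord_eq ↥D
    have hch : ∀ a b : X, ∃ c : X, a ∈ D → b ∈ D → c ∈ D ∧ a ≤ c ∧ b ≤ c := by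
      intro a b
      by_cases ha : a ∈ D
      · by_cases hb : b ∈ D
        · obtain ⟨c, hc1, hc2, hc3⟩ := hD a ha b hb
          exact ⟨c, fun _ _ => ⟨hc1, hc2, hc3⟩⟩
        · exact ⟨a, fun _ h => absurd h hb⟩
      · exact ⟨a, fun h _ => absurd h ha⟩
    choose u hu using hch
    have hu' : ∀ a ∈ D, ∀ b ∈ D, u a b ∈ D ∧ a ≤ u a b ∧ b ≤ u a b :=
      fun a ha b hb => hu a b ha hb
    -- initial segments of the well-order
    set segm : ↥D → Set X := fun x => insert (x : X) (Subtype.val '' {y : ↥D | r y x}) with hsegm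
    have hsegmD : ∀ x, segm x ⊆ D := by
      rintro x z (rfl | ⟨y, _, rfl⟩)
      · exact x.2
      · exact y.2
    have hsegm_mono : ∀ {x y : ↥D}, r x y → segm x ⊆ segm y := by
      rintro x y hxy z (rfl | ⟨w, hw, rfl⟩)
      · exact Or.inr ⟨x, hxy, rfl⟩
      · exact Or.inr ⟨w, (haveI := wo; _root_.trans hw hxy), rfl⟩
    have hsegm_card : ∀ x : ↥D, #(segm x) < #D := by
      intro x
      have h1 : #(segm x) ≤ #(Subtype.val '' {y : ↥D | r y x}) + 1 := mk_insert_le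
      have h2 : #(Subtype.val '' {y : ↥D | r y x}) ≤ #{y : ↥D | r y x} := mk_image_le
      have h3 : #{y : ↥D | r y x} < #↥D := by
        have := Cardinal.card_typein_lt x hr
        rwa [Ordinal.card_typein] at this
      have h4 : #↥D = #D := rfl
      calc #(segm x) ≤ #{y : ↥D | r y x} + 1 := h1.trans (by gcongr)
        _ < #D := Cardinal.add_lt_of_lt hℵ.le (h4 ▸ h3) (lt_trans one_lt_aleph0 hℵ)
    -- the directed pieces
    set Dx : ↥D → Set X := fun x => dcl u (segm x) with hDx
    have hDxD : ∀ x, Dx x ⊆ D := fun x => dcl_subset hu' (hsegmD x)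
    have hDx_dir : ∀ x, DirectedOn (· ≤ ·) (Dx x) := fun x => directedOn_dcl hu' (hsegmD x)
    have hDx_card : ∀ x, #(Dx x) < #D := by
      intro x
      exact ((mk_dcl_le u (segm x)).trans_lt (max_lt (hsegm_card x) hℵ))
    have hDx_sup : ∀ x : ↥D, ∃ s, IsLUB (Dx x) s := fun x =>
      IH _ ((hDx_card x).trans_le hκ) (Dx x) (hDx_dir x) le_rfl
    have hDx_mono : ∀ {x y : ↥D}, r x y → Dx x ⊆ Dx y := fun hxy => dcl_mono (hsegm_mono hxy)
    -- the chain of partial sups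
    set C : Set X := {s | ∃ x : ↥D, IsLUB (Dx x) s} with hC
    have hchain : IsChain (· ≤ ·) C := by
      rintro s ⟨x, hx⟩ t ⟨y, hy⟩ hst
      rcases (haveI := wo; trichotomous_of r x y) with hxy | rfl | hyx
      · exact Or.inl (hx.mono hy (hDx_mono hxy))
      · exact absurd (hx.unique hy) hst
      · exact Or.inr (hy.mono hx (hDx_mono hyx))
    obtain ⟨s, hs⟩ := hcc C hchain
    refine ⟨s, ⟨?_, ?_⟩⟩
    · intro d hd
      have hdx : d ∈ Dx ⟨d, hd⟩ := subset_dcl u _ (mem_insert _ _)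
      obtain ⟨t, ht⟩ := hDx_sup ⟨d, hd⟩
      exact (ht.1 hdx).trans (hs.1 ⟨⟨d, hd⟩, ht⟩)
    · intro b hb
      refine hs.2 ?_
      rintro t ⟨x, ht⟩
      exact ht.2 fun z hz => hb (hDxD x hz)
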